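/- Let T_1 and T_2 be balanced trees with disjoint vertex sets, and let T be the tree obtained from their disjoint union by identifying the root of T_1 with the root of T_2. If f is a function on the vertices of T_1 with L_{T_1} f = λ f (where L_{T_1} is the graph Laplacian of T_1) and f(root) = 0, then the function on the vertices of T that equals f on the vertices of T_1 and 0 on all other vertices satisfies L_T g = λ g, where L_T is the graph Laplacian of T. -/

import Mathlib

open scoped Classical

/-- Vertices of the balanced tree with `k` levels and branching sequence `c`:
a vertex at level `l` (`0 ≤ l ≤ k-1`) is a function assigning to each `i < l` a
label in `Fin (c i)` (the label of the level-`(i+1)` ancestor among its siblings). -/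
abbrev BTVert (k : ℕ) (c : ℕ → ℕ) : Type := Σ l : Fin k, ∀ i : Fin l.val, Fin (c i.val)

/-- `p` is the parent of `v` in the balanced tree. -/
def IsParentOf {k : ℕ} {c : ℕ → ℕ} (p v : BTVert k c) : Prop :=
  ∃ h : p.1.val + 1 = v.1.val,
    ∀ i : Fin p.1.val, v.2 ⟨i.val, by have := i.isLt; omega⟩ = p.2 i

/-- The balanced tree as a simple graph: each non-root vertex is adjacent to its parent. -/
def btGraph (k : ℕ) (c : ℕ → ℕ) : SimpleGraph (BTVert k c) where
  Adj u v := IsParentOf u v ∨ IsParentOf v u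
  symm := ⟨fun u v (h : IsParentOf u v ∨ IsParentOf v u) => h.symm⟩
  loopless := ⟨fun v h => by
    rcases h with ⟨h, -⟩ | ⟨h, -⟩ <;> omega⟩

/-- The root (the unique vertex at level 0). -/
def btRoot (k : ℕ) (c : ℕ → ℕ) (hk : 0 < k) : BTVert k c :=
  ⟨⟨0, hk⟩, fun i => i.elim0⟩

/-- `u` belongs to the maximal subtree rooted at `v` (`u` is `v` or a descendant of `v`). -/
def InSubtree {k : ℕ} {c : ℕ → ℕ} (v u : BTVert k c) : Prop :=
  ∃ h : v.1.val ≤ u.1.val,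
    ∀ i : Fin v.1.val, u.2 ⟨i.val, by have := i.isLt; omega⟩ = v.2 i

/-- A function on the vertices is stratified if it only depends on the level. -/
def Stratified {k : ℕ} {c : ℕ → ℕ} (f : BTVert k c → ℝ) : Prop :=
  ∀ u v : BTVert k c, u.1 = v.1 → f u = f v

/-- Number of vertices at level `l`: `n(l) = c(0) ⋯ c(l-1)`. -/
def nlev (c : ℕ → ℕ) (l : ℕ) : ℕ := ∏ i ∈ Finset.range l, c i

/-- The common degree `d(l)` of the vertices at level `l`. -/
def branchDeg (k : ℕ) (c : ℕ → ℕ) (l : ℕ) : ℕ :=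
  if l = 0 then c 0 else if l = k - 1 then 1 else c l + 1

/-- The symmetric tridiagonal matrix `T^{(l0)}` with diagonal `d(l0), …, d(k-1)` and
off-diagonal `√c(l0), …, √c(k-2)`. -/
noncomputable def matT (k : ℕ) (c : ℕ → ℕ) (l0 : ℕ) :
    Matrix (Fin (k - l0)) (Fin (k - l0)) ℝ := fun i j =>
  if i = j then (branchDeg k c (l0 + i.val) : ℝ)
  else if i.val + 1 = j.val then Real.sqrt (c (l0 + i.val))
  else if j.val + 1 = i.val then Real.sqrt (c (l0 + j.val))
  else 0

/-- The tridiagonal matrix `S^{(l0)}` with diagonal `d(l0), …, d(k-1)`, subdiagonal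
entries `-1` and superdiagonal entries `-c(l0), …, -c(k-2)`. -/
def matS (k : ℕ) (c : ℕ → ℕ) (l0 : ℕ) :
    Matrix (Fin (k - l0)) (Fin (k - l0)) ℝ := fun i j =>
  if i = j then (branchDeg k c (l0 + i.val) : ℝ)
  else if i.val + 1 = j.val then -(c (l0 + i.val) : ℝ)
  else if j.val + 1 = i.val then -1
  else 0

/-- `lam` is an eigenvalue of the matrix `A`. -/
def IsEigenvalue {V : Type*} [Fintype V] (A : Matrix V V ℝ) (lam : ℝ) : Prop :=
  ∃ f : V → ℝ, f ≠ 0 ∧ A.mulVec f = lam • f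

/-- The (geometric) multiplicity of `lam` as an eigenvalue of `A`. -/
noncomputable def eigMult {V : Type*} [Fintype V] (A : Matrix V V ℝ) (lam : ℝ) : ℕ :=
  Module.finrank ℝ
    ↥(LinearMap.ker (A.mulVecLin - lam • (LinearMap.id : (V → ℝ) →ₗ[ℝ] (V → ℝ))))

/-- The Dirichlet Laplacian on a subset `Ω` of the vertices of the balanced tree:
the principal submatrix of the Laplacian with rows and columns indexed by `Ω`. -/
noncomputable def dirichletLap (k : ℕ) (c : ℕ → ℕ) (Ω : Set (BTVert k c)) :
    Matrix Ω Ω ℝ := fun u v => (btGraph k c).lapMatrix ℝ u.1 v.1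

/-- Vertices of the tree obtained by identifying the roots of two balanced trees: the
vertices of the first tree, together with the non-root vertices of the second tree. -/
abbrev CombVert (k1 k2 : ℕ) (c1 c2 : ℕ → ℕ) : Type :=
  BTVert k1 c1 ⊕ {w : BTVert k2 c2 // w.1.val ≠ 0}

/-- Adjacency in the combined tree: edges within each tree are kept, and the level-1
vertices of the second tree are joined to the (identified) root, i.e. the root of the first
tree. -/
def combAdj {k1 k2 : ℕ} {c1 c2 : ℕ → ℕ} : CombVert k1 k2 c1 c2 → CombVert k1 k2 c1 c2 → Prop
  | Sum.inl a, Sum.inl b => (btGraph k1 c1).Adj a b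
  | Sum.inr a, Sum.inr b => (btGraph k2 c2).Adj a.1 b.1
  | Sum.inl a, Sum.inr b => a.1.val = 0 ∧ b.1.1.val = 1
  | Sum.inr a, Sum.inl b => b.1.val = 0 ∧ a.1.1.val = 1

/-- The tree obtained by identifying the roots of two balanced trees. -/
def combGraph (k1 k2 : ℕ) (c1 c2 : ℕ → ℕ) : SimpleGraph (CombVert k1 k2 c1 c2) where
  Adj := combAdj
  symm := ⟨by
    rintro (a | a) (b | b) h
    · exact (btGraph k1 c1).adj_symm h
    · exact h
    · exact h
    · exact (btGraph k2 c2).adj_symm h⟩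
  loopless := ⟨by
    rintro (a | a) h
    · exact (btGraph k1 c1).irrefl h
    · exact (btGraph k2 c2).irrefl (v := a.1) h⟩


lemma lap_mulVec_apply {V : Type*} [Fintype V] [DecidableEq V] (G : SimpleGraph V)
    [DecidableRel G.Adj] (f : V → ℝ) (u : V) :
    (G.lapMatrix ℝ).mulVec f u =
      (∑ v, if G.Adj u v then (1:ℝ) else 0) * f u - ∑ v, if G.Adj u v then f v else 0 := by
  have hdeg : (G.degree u : ℝ) = ∑ v, if G.Adj u v then (1:ℝ) else 0 := by
    rw [Finset.sum_boole]
    simp [SimpleGraph.degree, SimpleGraph.neighborFinset_eq_filter]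
  rw [SimpleGraph.lapMatrix, Matrix.sub_mulVec]
  simp only [Pi.sub_apply]
  rw [SimpleGraph.degMatrix, Matrix.mulVec_diagonal,
    SimpleGraph.adjMatrix_mulVec_apply, SimpleGraph.neighborFinset_eq_filter,
    Finset.sum_filter, hdeg]

lemma eq_root {k : ℕ} {c : ℕ → ℕ} (hk : 0 < k) (a : BTVert k c) (h : a.1.val = 0) :
    a = btRoot k c hk := by
  obtain ⟨⟨l, hl⟩, fn⟩ := a
  simp only at h
  subst h
  unfold btRoot
  congr 1
  funext i
  exact i.elim0

/-- an eigenfunction of the Laplacian of the first balanced tree vanishing at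
the root, extended by zero, is an eigenfunction (with the same eigenvalue) of the Laplacian
of the tree obtained by identifying the roots of the two balanced trees. -/
theorem eigenfunction_extends_to_combined_tree (k1 k2 : ℕ) (hk1 : 2 ≤ k1) (hk2 : 2 ≤ k2)
    (c1 c2 : ℕ → ℕ) (hc1 : ∀ l, l ≤ k1 - 2 → 1 ≤ c1 l) (hc2 : ∀ l, l ≤ k2 - 2 → 1 ≤ c2 l)
    (lam : ℝ) (f : BTVert k1 c1 → ℝ)
    (hf : ((btGraph k1 c1).lapMatrix ℝ).mulVec f = lam • f)
    (hroot : f (btRoot k1 c1 (by omega)) = 0) :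
    ((combGraph k1 k2 c1 c2).lapMatrix ℝ).mulVec (Sum.elim f fun _ => 0) =
      lam • Sum.elim f (fun _ => 0) := by
  classical
  funext u
  rw [lap_mulVec_apply]
  rcases u with a | a
  · have h1 := congrFun hf a
    rw [lap_mulVec_apply] at h1
    simp only [Pi.smul_apply, smul_eq_mul] at h1 ⊢
    simp only [Sum.elim_inl]
    rw [Fintype.sum_sum_type, Fintype.sum_sum_type]
    have hll : ∀ b, (combGraph k1 k2 c1 c2).Adj (Sum.inl a) (Sum.inl b) ↔
        (btGraph k1 c1).Adj a b := fun b => Iff.rfl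
    have hlr : ∀ b : {w : BTVert k2 c2 // w.1.val ≠ 0},
        (combGraph k1 k2 c1 c2).Adj (Sum.inl a) (Sum.inr b) ↔
        (a.1.val = 0 ∧ b.1.1.val = 1) := fun b => Iff.rfl
    simp only [hll, hlr, Sum.elim_inl, Sum.elim_inr, ite_self, Finset.sum_const_zero,
      add_zero]
    have hE : (∑ b : {w : BTVert k2 c2 // w.1.val ≠ 0},
        if a.1.val = 0 ∧ b.1.1.val = 1 then (1:ℝ) else 0) * f a = 0 := by
      by_cases h0 : a.1.val = 0
      · have ha : a = btRoot k1 c1 (by omega) := eq_root (by omega) a h0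
        rw [ha, hroot, mul_zero]
      · rw [Finset.sum_eq_zero (fun b _ => by simp [h0]), zero_mul]
    rw [add_mul, hE, add_zero]
    exact h1
  · simp only [Sum.elim_inr, Pi.smul_apply, smul_eq_mul, mul_zero, zero_sub, neg_eq_zero]
    rw [Fintype.sum_sum_type]
    have hrl : ∀ b : BTVert k1 c1, (combGraph k1 k2 c1 c2).Adj (Sum.inr a) (Sum.inl b) ↔
        (b.1.val = 0 ∧ a.1.1.val = 1) := fun b => Iff.rfl
    simp only [hrl, Sum.elim_inl, Sum.elim_inr, ite_self, Finset.sum_const_zero, add_zero]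
    refine Finset.sum_eq_zero fun b _ => ?_
    split_ifs with h
    · rw [eq_root (show 0 < k1 by omega) b h.1]; exact hroot
    · rfl
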